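/- Let Γ = Γ₀ ∪ e be a LOT obtained from Γ₀ by attaching one edge e at a vertex x, where the other vertex y of e occurs nowhere as an edge label in Γ. Then the 2-complex K(Γ) is VA if and only if K(Γ₀) is VA. -/

import Mathlib

/-- A combinatorial 2-complex: oriented edges come in inverse pairs (`bar`), and each
2-cell `f` is attached along the closed edge path `att f`. -/
structure TwoComplex where
  V : Type
  E : Type
  F : Type
  bar : E → E
  bar_invol : Function.Involutive bar
  ini : E → V
  att : F → List E

namespace TwoComplex

variable (C : TwoComplex)

def ter (e : C.E) : C.V := C.ini (C.bar e)

/-- Connectivity of the 1-skeleton. -/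
def Conn : Prop :=
  ∀ v w : C.V, Relation.ReflTransGen (fun a b => ∃ e, C.ini e = a ∧ C.ter e = b) v w

open Classical in
/-- `C` is a cell decomposition of the 2-sphere: finite, connected, every oriented edge
occurs exactly once in the attaching paths of the 2-cells (a closed oriented surface),
and the Euler characteristic is `2`. -/
noncomputable def IsSphere : Prop :=
  Finite C.V ∧ Finite C.E ∧ Finite C.F ∧ Nonempty C.F ∧
  (∀ e : C.E, C.bar e ≠ e) ∧
  (∀ e : C.E, (∑ᶠ f : C.F, ((C.att f).countP fun e' => decide (e' = e))) = 1) ∧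
  C.Conn ∧
  2 * (Nat.card C.V : ℤ) - Nat.card C.E + 2 * Nat.card C.F = 4

/-- The 2-cell `f` has a corner at `v` in position `i` of its attaching path. -/
def cornerAt (f : C.F) (i : ℕ) (v : C.V) : Prop :=
  ∃ h : i < (C.att f).length, C.ini ((C.att f).get ⟨i, h⟩) = v

end TwoComplex

/-- A combinatorial map of 2-complexes. -/
structure CMap (C L : TwoComplex) where
  vMap : C.V → L.V
  eMap : C.E → L.E
  fMap : C.F → L.F
  ini_comm : ∀ e, L.ini (eMap e) = vMap (C.ini e)
  bar_comm : ∀ e, L.bar (eMap e) = eMap (C.bar e)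
  att_comm : ∀ f, L.att (fMap f) = (C.att f).map eMap

/-- A spherical diagram over `L`: a combinatorial map from a cell-decomposed 2-sphere. -/
structure SphDiagram (L : TwoComplex) where
  C : TwoComplex
  sphere : C.IsSphere
  φ : CMap C L

namespace SphDiagram

variable {L : TwoComplex}

/-- `v` is a folding vertex with folding pair `(f₁, f₂)`: two distinct 2-cells of the
sphere have corners at `v` which are mapped mirror-wise to the same corner of the same
2-cell of `L`. -/
def FoldingData (D : SphDiagram L) (v : D.C.V) (f₁ f₂ : D.C.F) : Prop :=
  f₁ ≠ f₂ ∧ D.φ.fMap f₁ = D.φ.fMap f₂ ∧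
    ∃ i : ℕ, D.C.cornerAt f₁ i v ∧ D.C.cornerAt f₂ i v

def FoldingVertex (D : SphDiagram L) (v : D.C.V) : Prop :=
  ∃ f₁ f₂, D.FoldingData v f₁ f₂

/-- A spherical diagram is vertex reduced if it has no folding vertex. -/
def VertexReduced (D : SphDiagram L) : Prop := ∀ v, ¬ D.FoldingVertex v

end SphDiagram

/-- A 2-complex is vertex aspherical (VA) if every spherical diagram over it has a
folding vertex. -/
def VA (L : TwoComplex) : Prop := ∀ D : SphDiagram L, ∃ v, D.FoldingVertex v

/-- A subcomplex of a 2-complex. -/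
structure Subcomplex (L : TwoComplex) where
  sV : Set L.V
  sE : Set L.E
  sF : Set L.F
  bar_mem : ∀ e ∈ sE, L.bar e ∈ sE
  ini_mem : ∀ e ∈ sE, L.ini e ∈ sV
  att_mem : ∀ f ∈ sF, ∀ e ∈ L.att f, e ∈ sE

namespace Subcomplex

variable {L : TwoComplex}

/-- The subcomplex as a 2-complex in its own right. -/
def toComplex (K : Subcomplex L) : TwoComplex where
  V := K.sV
  E := K.sE
  F := K.sF
  bar e := ⟨L.bar e.1, K.bar_mem e.1 e.2⟩
  bar_invol e := Subtype.ext (L.bar_invol e.1)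
  ini e := ⟨L.ini e.1, K.ini_mem e.1 e.2⟩
  att f := (L.att f.1).pmap (fun e he => ⟨e, he⟩) (K.att_mem f.1 f.2)

/-- The spherical diagram `D` maps entirely into the subcomplex `K`. -/
def MapsInto (K : Subcomplex L) (D : SphDiagram L) : Prop :=
  (∀ v, D.φ.vMap v ∈ K.sV) ∧ (∀ e, D.φ.eMap e ∈ K.sE) ∧ (∀ f, D.φ.fMap f ∈ K.sF)

end Subcomplex

/-- `L` is VA relative to the subcomplex `K`: every spherical diagram not mapping
entirely into `K` has a folding vertex whose folding pair of 2-cells maps to `L − K`. -/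
def VArel (L : TwoComplex) (K : Subcomplex L) : Prop :=
  ∀ D : SphDiagram L, ¬ K.MapsInto D →
    ∃ v f₁ f₂, D.FoldingData v f₁ f₂ ∧ D.φ.fMap f₁ ∉ K.sF ∧ D.φ.fMap f₂ ∉ K.sF
/-- A labeled oriented graph (LOG): an oriented graph whose edges are labeled by vertices.
A labeled oriented tree (LOT) is a LOG satisfying `IsTree`. -/
structure LOG where
  V : Type
  E : Type
  src : E → V
  tgt : E → V
  lab : E → V

namespace LOG

variable (G : LOG)

/-- Adjacency in the underlying undirected graph. -/
def Adj (v w : G.V) : Prop :=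
  ∃ e, (G.src e = v ∧ G.tgt e = w) ∨ (G.src e = w ∧ G.tgt e = v)

/-- Adjacency using only edges from `S`. -/
def AdjOn (S : Set G.E) (v w : G.V) : Prop :=
  ∃ e ∈ S, (G.src e = v ∧ G.tgt e = w) ∨ (G.src e = w ∧ G.tgt e = v)

/-- The vertices incident to an edge set. -/
def verts (S : Set G.E) : Set G.V := {v | ∃ e ∈ S, G.src e = v ∨ G.tgt e = v}

/-- Connectivity of the subgraph spanned by the edge set `S`. -/
def ConnOn (S : Set G.E) : Prop :=
  ∀ v ∈ G.verts S, ∀ w ∈ G.verts S, Relation.ReflTransGen (G.AdjOn S) v w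

/-- The underlying graph is a finite tree: connected, without loops or multiple edges,
and with one more vertex than edges. -/
def IsTree : Prop :=
  Finite G.V ∧ Finite G.E ∧ Nonempty G.V ∧
  (∀ v w : G.V, Relation.ReflTransGen G.Adj v w) ∧
  (∀ e, G.src e ≠ G.tgt e) ∧
  (∀ e e', ({G.src e, G.tgt e} : Set G.V) = {G.src e', G.tgt e'} → e = e') ∧
  Nat.card G.V = Nat.card G.E + 1

/-- No edge is labeled with one of its own endpoints. -/
def Compressed : Prop := ∀ e, G.lab e ≠ G.src e ∧ G.lab e ≠ G.tgt e

/-- Each vertex occurs as an edge label at most once. -/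
def Inj : Prop := ∀ e e', G.lab e = G.lab e' → e = e'

/-- A leaf (boundary vertex): a vertex incident with exactly one edge. -/
def IsLeaf (v : G.V) : Prop := {e | G.src e = v ∨ G.tgt e = v}.ncard = 1

/-- Every boundary vertex occurs as an edge label. -/
def BoundaryReduced : Prop := ∀ v, G.IsLeaf v → ∃ e, G.lab e = v

/-- Reduced: compressed and boundary reduced. -/
def Reduced : Prop := G.Compressed ∧ G.BoundaryReduced

/-- A sub-LOT, given by a nonempty connected set of edges all of whose labels are
vertices of the subgraph. -/
def IsSubLOT (S : Set G.E) : Prop :=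
  S.Nonempty ∧ G.ConnOn S ∧ ∀ e ∈ S, G.lab e ∈ G.verts S

/-- A proper sub-LOT. -/
def ProperSubLOT (S : Set G.E) : Prop := G.IsSubLOT S ∧ S ≠ Set.univ

/-- A maximal proper sub-LOT. -/
def MaxProperSubLOT (S : Set G.E) : Prop :=
  G.ProperSubLOT S ∧ ∀ T, G.ProperSubLOT T → S ⊆ T → S = T

/-- A prime LOG: one with no proper sub-LOT. -/
def Prime : Prop := ∀ S, ¬ G.ProperSubLOT S

/-- A LOG freely decomposes if it is the union of two proper sub-LOTs meeting in a
single vertex. -/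
def FreelyDecomposes : Prop :=
  ∃ (SL SR : Set G.E) (x : G.V), G.ProperSubLOT SL ∧ G.ProperSubLOT SR ∧
    SL ∪ SR = Set.univ ∧ G.verts SL ∩ G.verts SR = {x}

/-- The map collapsing the vertices of the subgraph spanned by `S` to the vertex `x`. -/
noncomputable def collapseMap (S : Set G.E) (x : G.V) : G.V → G.V :=
  fun v => letI := Classical.dec (v ∈ G.verts S); if v ∈ G.verts S then x else v

/-- The quotient LOG obtained by collapsing the sub-LOT `S` to the vertex `x`
(the vertex of `S` not occurring as an edge label of `S`).  The edges are the edges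
outside `S`; endpoints and labels are pushed forward along the collapse map. -/
noncomputable def collapse (S : Set G.E) (x : G.V) : LOG where
  V := G.V
  E := {e : G.E // e ∉ S}
  src e := G.collapseMap S x (G.src e.1)
  tgt e := G.collapseMap S x (G.tgt e.1)
  lab e := G.collapseMap S x (G.lab e.1)

end LOG

/-- The standard 2-complex `K(Γ)` of a LOG `Γ`: one vertex, one edge per vertex of `Γ`,
and for each edge of `Γ` from `x` to `y` labeled `z` a 2-cell attached along
`x z (z y)⁻¹ = x z y⁻¹ z⁻¹`. -/
def LOG.Kc (G : LOG) : TwoComplex where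
  V := PUnit
  E := G.V × Bool
  F := G.E
  bar p := (p.1, !p.2)
  bar_invol := by intro p; simp
  ini _ := PUnit.unit
  att e := [(G.src e, true), (G.lab e, true), (G.tgt e, false), (G.lab e, false)]

/-- The sub-LOG spanned by a set of edges. -/
def LOG.restrict (G : LOG) (S : Set G.E) : LOG where
  V := G.V
  E := {e : G.E // e ∈ S}
  src e := G.src e.1
  tgt e := G.tgt e.1
  lab e := G.lab e.1

section Aux

variable {G : LOG} {S : Set G.E}

/-- Push a spherical diagram over `K(Γ₀)` forward along the inclusion to `K(Γ)`. -/
def SphDiagram.ofSub (D : SphDiagram (G.restrict S).Kc) : SphDiagram G.Kc where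
  C := D.C
  sphere := D.sphere
  φ :=
    { vMap := D.φ.vMap
      eMap := D.φ.eMap
      fMap := fun f => (D.φ.fMap f).1
      ini_comm := fun e => rfl
      bar_comm := D.φ.bar_comm
      att_comm := fun f => D.φ.att_comm f }

/-- Restrict a spherical diagram over `K(Γ)` whose 2-cells all map into `S`. -/
def SphDiagram.toSub (D : SphDiagram G.Kc) (h : ∀ f, D.φ.fMap f ∈ S) :
    SphDiagram (G.restrict S).Kc where
  C := D.C
  sphere := D.sphere
  φ :=
    { vMap := D.φ.vMap
      eMap := D.φ.eMap
      fMap := fun f => ⟨D.φ.fMap f, h f⟩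
      ini_comm := fun e => rfl
      bar_comm := D.φ.bar_comm
      att_comm := fun f => D.φ.att_comm f }

/-- No 2-cell of a spherical diagram over `K(Γ)` can map to the 2-cell coming
from the attached edge `e₀`, because the edge `y` occurs exactly once in the
boundary of that 2-cell and nowhere else. -/
lemma SphDiagram.fMap_ne (hst : ∀ e, G.src e ≠ G.tgt e) (e₀ : G.E) (y : G.V)
    (hy : G.src e₀ = y ∨ G.tgt e₀ = y)
    (hyonly : ∀ e, e ≠ e₀ → G.src e ≠ y ∧ G.tgt e ≠ y)
    (hylab : ∀ e, G.lab e ≠ y)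
    (D : SphDiagram G.Kc) (f : D.C.F) : D.φ.fMap f ≠ e₀ := by
  classical
  intro hf
  obtain ⟨-, -, -, -, -, hcount, -, -⟩ := D.sphere
  -- the boundary of `f` contains an edge mapping to `(y, b)` with `b` depending on `hy`
  have hmem : ∃ b : Bool, ((y, b) : G.V × Bool) ∈ (D.C.att f).map D.φ.eMap ∧
      ((y, !b) ∉ G.Kc.att e₀) := by
    rw [← D.φ.att_comm f, hf]
    rcases hy with h | h
    · refine ⟨true, ?_, ?_⟩
      · change ((y, true) : G.V × Bool) ∈ [((G.src e₀, true) : G.V × Bool), (G.lab e₀, true), (G.tgt e₀, false), (G.lab e₀, false)]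
        simp [LOG.Kc, h, List.mem_cons]
      · have h2 : G.tgt e₀ ≠ y := by rw [← h]; exact fun hc => hst e₀ hc.symm
        change ((y, false) : G.V × Bool) ∉ [((G.src e₀, true) : G.V × Bool), (G.lab e₀, true), (G.tgt e₀, false), (G.lab e₀, false)]
        simp [LOG.Kc, h2.symm, (hylab e₀).symm, List.mem_cons]
    · refine ⟨false, ?_, ?_⟩
      · change ((y, false) : G.V × Bool) ∈ [((G.src e₀, true) : G.V × Bool), (G.lab e₀, true), (G.tgt e₀, false), (G.lab e₀, false)]
        simp [LOG.Kc, h, List.mem_cons]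
      · have h2 : G.src e₀ ≠ y := by rw [← h]; exact fun hc => hst e₀ hc
        change ((y, true) : G.V × Bool) ∉ [((G.src e₀, true) : G.V × Bool), (G.lab e₀, true), (G.tgt e₀, false), (G.lab e₀, false)]
        simp [LOG.Kc, h2.symm, (hylab e₀).symm, List.mem_cons]
  obtain ⟨b, hmem, hnot⟩ := hmem
  obtain ⟨a, -, ha⟩ := List.mem_map.mp hmem
  -- the inverse edge `D.C.bar a` lies in the boundary of some 2-cell `f'`
  have hex : ∃ f', D.C.bar a ∈ D.C.att f' := by
    by_contra hno
    push_neg at hno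
    have hz : (∑ᶠ f' : D.C.F,
        ((D.C.att f').countP fun e' => decide (e' = D.C.bar a))) = 0 := by
      apply finsum_eq_zero_of_forall_eq_zero
      intro f'
      rw [List.countP_eq_zero]
      intro x hx
      simp only [decide_eq_true_eq]
      rintro rfl
      exact hno f' hx
    rw [hcount (D.C.bar a)] at hz
    exact one_ne_zero hz
  obtain ⟨f', hf'⟩ := hex
  -- its image `(y, !b)` lies in the boundary of the image 2-cell
  have himg : ((y, !b) : G.V × Bool) ∈ G.Kc.att (D.φ.fMap f') := by
    rw [D.φ.att_comm f']
    have : D.φ.eMap (D.C.bar a) = (y, !b) := by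
      rw [← D.φ.bar_comm a, ha]
      rfl
    exact this ▸ List.mem_map_of_mem hf'
  -- but `(y, !b)` occurs in no attaching path of `K(Γ)`
  set e' := D.φ.fMap f' with he'
  have hcase : G.src e' = y ∧ (!b) = true ∨ G.lab e' = y ∨
      G.tgt e' = y ∧ (!b) = false := by
    simp only [LOG.Kc, List.mem_cons, List.not_mem_nil, or_false, Prod.mk.injEq] at himg
    change (y, !b) ∈ [((G.src e', true) : G.V × Bool), (G.lab e', true), (G.tgt e', false), (G.lab e', false)] at himg
    simp only [List.mem_cons, List.not_mem_nil, or_false, Prod.mk.injEq] at himg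
    tauto
  by_cases hee : e' = e₀
  · rw [hee] at himg
    exact hnot himg
  · rcases hcase with ⟨h1, -⟩ | h1 | ⟨h1, -⟩
    · exact (hyonly e' hee).1 h1
    · exact hylab e' h1
    · exact (hyonly e' hee).2 h1

end Aux

/-- Let `Γ = Γ₀ ∪ e₀` be a LOT obtained from `Γ₀` by attaching one edge
`e₀` at a vertex `x` of `Γ₀`, where the other vertex `y` of `e₀` occurs nowhere as an edge
label in `Γ` (a boundary reduction).  Then `K(Γ)` is VA if and only if `K(Γ₀)` is VA. -/
theorem VA_iff_boundary_reduction
    (G : LOG) (hT : G.IsTree) (e₀ : G.E) (y : G.V)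
    (hy : G.src e₀ = y ∨ G.tgt e₀ = y)
    (hyonly : ∀ e, e ≠ e₀ → G.src e ≠ y ∧ G.tgt e ≠ y)
    (hylab : ∀ e, G.lab e ≠ y)
    (hx : ∃ x, (G.src e₀ = x ∨ G.tgt e₀ = x) ∧ x ≠ y ∧ x ∈ G.verts {e | e ≠ e₀}) :
    VA G.Kc ↔ VA (G.restrict {e | e ≠ e₀}).Kc := by
  have hst : ∀ e, G.src e ≠ G.tgt e := hT.2.2.2.2.1
  constructor
  · -- VA of `K(Γ)` passes to the subcomplex `K(Γ₀)`
    intro hVA D'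
    obtain ⟨v, f₁, f₂, hne, heq, i, h1, h2⟩ := hVA (SphDiagram.ofSub D')
    exact ⟨v, f₁, f₂, hne, Subtype.ext heq, i, h1, h2⟩
  · -- conversely, every diagram over `K(Γ)` avoids the cell `e₀`, hence lives in `K(Γ₀)`
    intro hVA D
    have hS : ∀ f, D.φ.fMap f ∈ {e | e ≠ e₀} :=
      fun f => SphDiagram.fMap_ne hst e₀ y hy hyonly hylab D f
    obtain ⟨v, f₁, f₂, hne, heq, i, h1, h2⟩ := hVA (SphDiagram.toSub D hS)
    exact ⟨v, f₁, f₂, hne, congrArg Subtype.val heq, i, h1, h2⟩
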